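/- Representer theorem with null space: Let H be a real Hilbert space, H₀ a closed subspace (the null space of the penalty), P the orthogonal projection onto H₀^⊥, and η_1,...,η_n ∈ H. Any minimizer of f ↦ C(⟨η_1,f⟩,...,⟨η_n,f⟩) + λ‖Pf‖² over H can be taken in the set span{P η_1,...,P η_n} + H₀: that is, projecting the component of f orthogonal to H₀ onto span{Pη_i} does not increase the objective and does not change the values ⟨η_i, f⟩ beyond what projection in the penalized component allows—formally, for any f, the element f' = f₀ + Q(Pf), where f₀ is the H₀-component of f and Q is orthogonal projection onto span{Pη_1,...,Pη_n}, satisfies ⟨η_i, f'⟩-based data fit plus λ‖Pf'‖² ≤ the objective at f whenever replacing Pf by Q(Pf) leaves all ⟨η_i,f⟩ unchanged, which holds since ⟨η_i, Pf - Q(Pf)⟩ = ⟨Pη_i, Pf - Q(Pf)⟩ = 0. -/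

import Mathlib

open InnerProductSpace

/-- Representer theorem with a null space `H₀`: with `P` orthogonal projection onto `H₀ᗮ`
and `Q` orthogonal projection onto `span {P η₁, …, P ηₙ}`, the element
`f' = f₀ + Q (P f)` (where `f₀` is the `H₀`-component of `f`) has objective value
`C(⟪ηᵢ, f'⟫) + λ‖P f'‖²` no larger than the objective at `f`. -/
theorem representer_theorem_with_null_space
    {H : Type*} [NormedAddCommGroup H] [InnerProductSpace ℝ H] [CompleteSpace H]
    (H₀ : Submodule ℝ H) [CompleteSpace H₀]
    {n : ℕ} (η : Fin n → H) (C : (Fin n → ℝ) → ℝ) (lam : ℝ) (hlam : 0 < lam)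
    (P : H → H) (hP : ∀ g, P g = (Submodule.orthogonalProjectionOnto H₀ᗮ g : H))
    (S : Submodule ℝ H) (hS : S = Submodule.span ℝ (Set.range fun i => P (η i)))
    [CompleteSpace S]
    (f f' : H) (hf' : f' = (Submodule.orthogonalProjectionOnto H₀ f : H) + (Submodule.orthogonalProjectionOnto S (P f) : H)) :
    C (fun i => ⟪η i, f'⟫_ℝ) + lam * ‖P f'‖ ^ 2 ≤
      C (fun i => ⟪η i, f⟫_ℝ) + lam * ‖P f‖ ^ 2 := by
  set f₀ : H := (Submodule.orthogonalProjectionOnto H₀ f : H) with hf₀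
  set q : H := (Submodule.orthogonalProjectionOnto S (P f) : H) with hq
  have hSle : S ≤ H₀ᗮ := by
    rw [hS, Submodule.span_le]
    rintro _ ⟨i, rfl⟩
    simp only [hP]
    exact (Submodule.orthogonalProjectionOnto H₀ᗮ (η i)).2
  have hqmem : q ∈ H₀ᗮ := hSle (Submodule.orthogonalProjectionOnto S (P f)).2
  have hPf' : P f' = q := by
    rw [hP, hf', map_add]
    have h1 : Submodule.orthogonalProjectionOnto H₀ᗮ f₀ = 0 :=
      Submodule.orthogonalProjectionOnto_apply_of_mem_orthogonal
        (Submodule.le_orthogonal_orthogonal H₀ (Submodule.orthogonalProjectionOnto H₀ f).2)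
    have h2 : (Submodule.orthogonalProjectionOnto H₀ᗮ q : H) = q :=
      congrArg Subtype.val
        (Submodule.orthogonalProjectionOnto_mem_subspace_eq_self (⟨q, hqmem⟩ : H₀ᗮ))
    rw [h1, Submodule.coe_add, h2, Submodule.coe_zero, zero_add]
  have hfdec : f = f₀ + P f := by
    rw [hP, hf₀]
    exact (Submodule.starProjection_add_starProjection_orthogonal (K := H₀) f).symm
  have hdata : ∀ i, ⟪η i, f'⟫_ℝ = ⟪η i, f⟫_ℝ := by
    intro i
    have hw : P f - q ∈ Sᗮ := by
      rw [hq]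
      exact Submodule.sub_starProjection_mem_orthogonal (K := S) (P f)
    have hwH₀ : P f - q ∈ H₀ᗮ := by
      apply Submodule.sub_mem
      · rw [hP]; exact (Submodule.orthogonalProjectionOnto H₀ᗮ f).2
      · exact hqmem
    have hηi : η i = (Submodule.orthogonalProjectionOnto H₀ (η i) : H) + P (η i) := by
      rw [hP]
      exact (Submodule.starProjection_add_starProjection_orthogonal (K := H₀) (η i)).symm
    have hPηS : P (η i) ∈ S := by
      rw [hS]
      exact Submodule.subset_span ⟨i, rfl⟩
    have key : ⟪η i, P f - q⟫_ℝ = 0 := by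
      rw [hηi, inner_add_left,
        Submodule.inner_right_of_mem_orthogonal (Submodule.orthogonalProjectionOnto H₀ (η i)).2 hwH₀,
        Submodule.inner_right_of_mem_orthogonal hPηS hw]
      ring
    have hdiff : ⟪η i, f⟫_ℝ - ⟪η i, f'⟫_ℝ = ⟪η i, P f - q⟫_ℝ := by
      rw [← inner_sub_right]
      congr 1
      rw [hf']
      nth_rewrite 1 [hfdec]
      abel
    linarith [key, hdiff]
  have hnorm : ‖q‖ ≤ ‖P f‖ :=
    calc ‖q‖ = ‖Submodule.orthogonalProjectionOnto S (P f)‖ := rfl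
      _ ≤ ‖Submodule.orthogonalProjectionOnto S‖ * ‖P f‖ :=
          ContinuousLinearMap.le_opNorm (Submodule.orthogonalProjectionOnto S) (P f)
      _ ≤ 1 * ‖P f‖ :=
          mul_le_mul_of_nonneg_right (Submodule.orthogonalProjectionOnto_norm_le S) (norm_nonneg _)
      _ = ‖P f‖ := one_mul _
  have hC : C (fun i => ⟪η i, f'⟫_ℝ) = C (fun i => ⟪η i, f⟫_ℝ) := by
    congr 1; funext i; exact hdata i
  rw [hC, hPf']
  have hsq : ‖q‖ ^ 2 ≤ ‖P f‖ ^ 2 := pow_le_pow_left₀ (norm_nonneg _) hnorm 2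
  nlinarith [hlam.le]
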